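/- Let H, U be Hilbert spaces, G : U → H a bounded operator with dense range, Q = G G*, y₀, z¹ ∈ H, and T a bounded operator on H. Define u_α = G*(α I + Q)^{-1}(z¹ − T y₀) for α ∈ (0,1]. Then T y₀ + G u_α → z¹ in H as α → 0⁺. -/

import Mathlib

open Filter

set_option maxHeartbeats 1000000

section Aux

variable {H U : Type*}
    [NormedAddCommGroup H] [InnerProductSpace ℝ H] [CompleteSpace H]
    [NormedAddCommGroup U] [InnerProductSpace ℝ U] [CompleteSpace U]

lemma aux_apply (G : U →L[ℝ] H) (inv : ℝ → H →L[ℝ] H) (α : ℝ)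
    (h : (α • ContinuousLinearMap.id ℝ H + G ∘L ContinuousLinearMap.adjoint G) ∘L inv α
        = ContinuousLinearMap.id ℝ H) (x : H) :
    α • inv α x + G (ContinuousLinearMap.adjoint G (inv α x)) = x := by
  have := congrArg (fun A : H →L[ℝ] H => A x) h
  simpa using this

lemma aux_eq (G : U →L[ℝ] H) (inv : ℝ → H →L[ℝ] H) (α : ℝ)
    (h : (α • ContinuousLinearMap.id ℝ H + G ∘L ContinuousLinearMap.adjoint G) ∘L inv α
        = ContinuousLinearMap.id ℝ H) (x : H) :
    α * ‖inv α x‖ ^ 2 + ‖ContinuousLinearMap.adjoint G (inv α x)‖ ^ 2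
      = inner ℝ x (inv α x) := by
  have hx := aux_apply G inv α h x
  have h1 : (inner ℝ x (inv α x) : ℝ)
      = α * ‖inv α x‖ ^ 2 + ‖ContinuousLinearMap.adjoint G (inv α x)‖ ^ 2 := by
    calc (inner ℝ x (inv α x) : ℝ)
        = inner ℝ (α • inv α x + G (ContinuousLinearMap.adjoint G (inv α x))) (inv α x) := by
          rw [hx]
      _ = α * inner ℝ (inv α x) (inv α x)
            + (inner ℝ (inv α x) (G (ContinuousLinearMap.adjoint G (inv α x))) : ℝ) := by
          rw [inner_add_left, real_inner_smul_left,
            real_inner_comm (G (ContinuousLinearMap.adjoint G (inv α x))) (inv α x)]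
      _ = α * ‖inv α x‖ ^ 2 + ‖ContinuousLinearMap.adjoint G (inv α x)‖ ^ 2 := by
          rw [← ContinuousLinearMap.adjoint_inner_left G
              (ContinuousLinearMap.adjoint G (inv α x)) (inv α x),
            real_inner_self_eq_norm_sq, real_inner_self_eq_norm_sq]
  exact h1.symm

lemma key1 (G : U →L[ℝ] H) (inv : ℝ → H →L[ℝ] H) (α : ℝ) (hα : 0 < α)
    (h : (α • ContinuousLinearMap.id ℝ H + G ∘L ContinuousLinearMap.adjoint G) ∘L inv α
        = ContinuousLinearMap.id ℝ H) (x : H) :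
    α * ‖inv α x‖ ≤ ‖x‖ := by
  have he := aux_eq G inv α h x
  have hle : α * ‖inv α x‖ ^ 2 ≤ ‖x‖ * ‖inv α x‖ := by
    have := real_inner_le_norm x (inv α x)
    nlinarith [sq_nonneg ‖ContinuousLinearMap.adjoint G (inv α x)‖]
  rcases eq_or_lt_of_le (norm_nonneg (inv α x)) with h0 | h0
  · rw [← h0]; simpa using norm_nonneg x
  · exact (mul_le_mul_iff_of_pos_right h0).mp (by nlinarith)

lemma key2 (G : U →L[ℝ] H) (inv : ℝ → H →L[ℝ] H) (α : ℝ) (hα : 0 < α)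
    (h : (α • ContinuousLinearMap.id ℝ H + G ∘L ContinuousLinearMap.adjoint G) ∘L inv α
        = ContinuousLinearMap.id ℝ H) (v : U) :
    α * ‖inv α (G v)‖ ≤ Real.sqrt α * ‖v‖ := by
  have he := aux_eq G inv α h (G v)
  set y := inv α (G v)
  have hi : (inner ℝ (G v) y : ℝ) = inner ℝ v (ContinuousLinearMap.adjoint G y) := by
    rw [← ContinuousLinearMap.adjoint_inner_right]
  have hle : α * ‖y‖ ^ 2 + ‖ContinuousLinearMap.adjoint G y‖ ^ 2
      ≤ ‖v‖ * ‖ContinuousLinearMap.adjoint G y‖ := by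
    rw [he, hi]; exact real_inner_le_norm _ _
  have h2 : α * ‖y‖ ^ 2 ≤ ‖v‖ ^ 2 := by
    nlinarith [norm_nonneg v, norm_nonneg (ContinuousLinearMap.adjoint G y),
      sq_nonneg (‖v‖ - ‖ContinuousLinearMap.adjoint G y‖)]
  have hsq : (α * ‖y‖) ^ 2 ≤ (Real.sqrt α * ‖v‖) ^ 2 := by
    rw [mul_pow, mul_pow, Real.sq_sqrt hα.le]
    nlinarith [norm_nonneg y, hα.le]
  have h1 : 0 ≤ α * ‖y‖ := mul_nonneg hα.le (norm_nonneg y)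
  have h2' : 0 ≤ Real.sqrt α * ‖v‖ := mul_nonneg (Real.sqrt_nonneg _) (norm_nonneg v)
  nlinarith

end Aux

/-- Abstract form of Lemma 3.2: with `u_α = G*(αI+Q)⁻¹(z¹ - T y₀)` and `G` of dense
range, the terminal state `T y₀ + G u_α` converges to `z¹` as `α → 0⁺`. -/
theorem stmt_13 {H U : Type*}
    [NormedAddCommGroup H] [InnerProductSpace ℝ H] [CompleteSpace H]
    [NormedAddCommGroup U] [InnerProductSpace ℝ U] [CompleteSpace U]
    (G : U →L[ℝ] H) (hG : DenseRange G)
    (inv : ℝ → H →L[ℝ] H)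
    (hinv : ∀ α : ℝ, 0 < α →
      (α • ContinuousLinearMap.id ℝ H + G ∘L ContinuousLinearMap.adjoint G) ∘L inv α
        = ContinuousLinearMap.id ℝ H ∧
      inv α ∘L (α • ContinuousLinearMap.id ℝ H + G ∘L ContinuousLinearMap.adjoint G)
        = ContinuousLinearMap.id ℝ H)
    (T : H →L[ℝ] H) (y₀ z₁ : H)
    (u : ℝ → U)
    (hu : ∀ α : ℝ, u α = ContinuousLinearMap.adjoint G (inv α (z₁ - T y₀))) :
    Tendsto (fun α : ℝ => T y₀ + G (u α)) (nhdsWithin 0 (Set.Ioi 0)) (nhds z₁) := by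
  have heq : ∀ α : ℝ, 0 < α →
      T y₀ + G (u α) = z₁ - α • inv α (z₁ - T y₀) := by
    intro α hα
    have hx := aux_apply G inv α (hinv α hα).1 (z₁ - T y₀)
    rw [hu α]
    have hGu : G (ContinuousLinearMap.adjoint G (inv α (z₁ - T y₀)))
        = (z₁ - T y₀) - α • inv α (z₁ - T y₀) := by
      rw [add_comm] at hx; exact eq_sub_of_add_eq hx
    rw [hGu]; abel
  have hz : Tendsto (fun α : ℝ => α • inv α (z₁ - T y₀)) (nhdsWithin 0 (Set.Ioi 0)) (nhds 0) := by
    rw [Metric.tendsto_nhdsWithin_nhds]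
    intro ε hε
    obtain ⟨w, hw⟩ := Metric.denseRange_iff.mp hG (z₁ - T y₀) (ε / 2) (by positivity)
    have hwd : ‖(z₁ - T y₀) - G w‖ < ε / 2 := by
      rw [← dist_eq_norm]; exact hw
    refine ⟨(ε / 2 / (‖w‖ + 1)) ^ 2, by positivity, ?_⟩
    intro α hα hdist
    have hα0 : 0 < α := hα
    have h1 := (hinv α hα0).1
    rw [dist_eq_norm] at hdist ⊢
    rw [sub_zero] at hdist ⊢
    have hαlt : α < (ε / 2 / (‖w‖ + 1)) ^ 2 := by
      rwa [Real.norm_eq_abs, abs_of_pos hα0] at hdist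
    have hsplit : α • inv α (z₁ - T y₀)
        = α • inv α ((z₁ - T y₀) - G w) + α • inv α (G w) := by
      rw [← smul_add, ← map_add]; congr 1; abel
    rw [hsplit]
    have hb1 : ‖α • inv α ((z₁ - T y₀) - G w)‖ ≤ ‖(z₁ - T y₀) - G w‖ := by
      rw [norm_smul, Real.norm_eq_abs, abs_of_pos hα0]
      exact key1 G inv α hα0 h1 _
    have hb2 : ‖α • inv α (G w)‖ ≤ Real.sqrt α * ‖w‖ := by
      rw [norm_smul, Real.norm_eq_abs, abs_of_pos hα0]
      exact key2 G inv α hα0 h1 _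
    have hsq : Real.sqrt α * ‖w‖ < ε / 2 := by
      have hsa : Real.sqrt α < ε / 2 / (‖w‖ + 1) := by
        have := Real.sqrt_lt_sqrt hα0.le hαlt
        rwa [Real.sqrt_sq (by positivity)] at this
      calc Real.sqrt α * ‖w‖ ≤ Real.sqrt α * (‖w‖ + 1) := by
            have := Real.sqrt_nonneg α; nlinarith
        _ < ε / 2 / (‖w‖ + 1) * (‖w‖ + 1) :=
            mul_lt_mul_of_pos_right hsa (by positivity)
        _ = ε / 2 := by field_simp
    calc ‖α • inv α ((z₁ - T y₀) - G w) + α • inv α (G w)‖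
        ≤ ‖α • inv α ((z₁ - T y₀) - G w)‖ + ‖α • inv α (G w)‖ := norm_add_le _ _
      _ < ε / 2 + ε / 2 :=
          add_lt_add_of_le_of_lt (le_trans hb1 hwd.le) (lt_of_le_of_lt hb2 hsq)
      _ = ε := by ring
  have hmain : Tendsto (fun α : ℝ => z₁ - α • inv α (z₁ - T y₀))
      (nhdsWithin 0 (Set.Ioi 0)) (nhds z₁) := by
    have := tendsto_const_nhds (x := z₁) (f := nhdsWithin (0:ℝ) (Set.Ioi 0)) |>.sub hz
    simpa using this
  apply hmain.congr'
  filter_upwards [self_mem_nhdsWithin] with α hα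
  exact (heq α hα).symm
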